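/- Let A be a compact Hermitian operator on a separable Hilbert space with λ_max(A) = -λ_min(A) = ‖A‖ > 0, and let E₊, E₋ be the finite-rank spectral projections of λ_max(A) and λ_min(A). Suppose there is a nonzero Hermitian trace-class X with zero diagonal, E₊X⁺ = X⁺, E₋X⁻ = X⁻, and tr(XA) = ‖A‖‖X‖₁. Then for every compact real diagonal operator D there exist unit vectors y ∈ ran(E₊) and z ∈ ran(E₋) with ⟨Dy, y⟩ ≤ ⟨Dz, z⟩. -/

import Mathlib

open scoped InnerProductSpace
open ContinuousLinearMap

noncomputable section

variable {H : Type*} [NormedAddCommGroup H] [InnerProductSpace ℂ H] [CompleteSpace H]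

/-- The absolute value `|A| = (A^*A)^{1/2}` of an operator. -/
def opAbs (A : H →L[ℂ] H) : H →L[ℂ] H := CFC.sqrt (ContinuousLinearMap.adjoint A * A)

/-- The trace of an operator computed in the Hilbert basis `e`. -/
def opTrace (e : HilbertBasis ℕ ℂ H) (A : H →L[ℂ] H) : ℂ := ∑' n, ⟪e n, A (e n)⟫_ℂ

/-- The trace norm `‖A‖₁ = tr |A|` computed in the Hilbert basis `e`. -/
def traceNorm (e : HilbertBasis ℕ ℂ H) (A : H →L[ℂ] H) : ℝ :=
  ∑' n, (⟪e n, opAbs A (e n)⟫_ℂ).re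

/-- `A` is trace class: the diagonal of `|A|` is summable. -/
def IsTraceClass (e : HilbertBasis ℕ ℂ H) (A : H →L[ℂ] H) : Prop :=
  Summable fun n => (⟪e n, opAbs A (e n)⟫_ℂ).re

/-- `D` is diagonal in the basis `e` with real diagonal entries. -/
def RealDiag (e : HilbertBasis ℕ ℂ H) (D : H →L[ℂ] H) : Prop :=
  ∀ n, ∃ d : ℝ, D (e n) = (d : ℂ) • e n

/-- Distance from `C` to the compact real diagonal operators, in operator norm. -/
def diagDistK (e : HilbertBasis ℕ ℂ H) (C : H →L[ℂ] H) : ℝ :=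
  ⨅ D : {D : H →L[ℂ] H // IsCompactOperator ⇑D ∧ RealDiag e D}, ‖C + (D : H →L[ℂ] H)‖

/-- Positive part `X⁺ = (|X| + X)/2`. -/
def opPosPart (X : H →L[ℂ] H) : H →L[ℂ] H := (2⁻¹ : ℂ) • (opAbs X + X)

/-- Negative part `X⁻ = (|X| - X)/2`. -/
def opNegPart (X : H →L[ℂ] H) : H →L[ℂ] H := (2⁻¹ : ℂ) • (opAbs X - X)

lemma opAbs_eq_posPart_add_negPart (X : H →L[ℂ] H) (hXsa : IsSelfAdjoint X) :
    opAbs X = X⁺ + X⁻ := by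
  have key : (X⁺ + X⁻) * (X⁺ + X⁻) = ContinuousLinearMap.adjoint X * X := by
    rw [← ContinuousLinearMap.star_eq_adjoint, hXsa.star_eq]
    conv_rhs => rw [← CFC.posPart_sub_negPart X hXsa]
    simp only [mul_add, add_mul, mul_sub, sub_mul, CFC.posPart_mul_negPart,
      CFC.negPart_mul_posPart]
    abel
  exact CFC.sqrt_unique key (add_nonneg (CFC.posPart_nonneg X) (CFC.negPart_nonneg X))

lemma opPosPart_eq (X : H →L[ℂ] H) (hXsa : IsSelfAdjoint X) : opPosPart X = X⁺ := by
  have h : X⁺ - X⁻ = X := CFC.posPart_sub_negPart X hXsa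
  have h2 : (2⁻¹ : ℂ) • (X⁺ + X⁻ + (X⁺ - X⁻)) = X⁺ := by module
  rw [h] at h2
  rw [opPosPart, opAbs_eq_posPart_add_negPart X hXsa, h2]

lemma opNegPart_eq (X : H →L[ℂ] H) (hXsa : IsSelfAdjoint X) : opNegPart X = X⁻ := by
  have h : X⁺ - X⁻ = X := CFC.posPart_sub_negPart X hXsa
  have h2 : (2⁻¹ : ℂ) • (X⁺ + X⁻ - (X⁺ - X⁻)) = X⁻ := by module
  rw [h] at h2
  rw [opNegPart, opAbs_eq_posPart_add_negPart X hXsa, h2]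

lemma inner_self_one {x : H} (hx : ‖x‖ = 1) : ⟪x, x⟫_ℂ = 1 := by
  rw [inner_self_eq_norm_sq_to_K, hx]
  norm_num

lemma inner_re_nonneg_of_nonneg {T : H →L[ℂ] H} (hT : (0 : H →L[ℂ] H) ≤ T) (x : H) :
    0 ≤ (⟪x, T x⟫_ℂ).re := by
  exact (Complex.nonneg_iff.mp (((ContinuousLinearMap.nonneg_iff_isPositive T).mp hT).inner_nonneg_right x)).1

/-- Spectral decomposition of a selfadjoint operator whose range lies in the (finite
dimensional) range of an idempotent `E`. -/
lemma keyDecomp (E P : H →L[ℂ] H) (hidem : E * E = E)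
    (hfin : FiniteDimensional ℂ (LinearMap.range (E : H →ₗ[ℂ] H)))
    (hPsa : IsSelfAdjoint P) (hrange : E * P = P) :
    ∃ (k : ℕ) (v : Fin k → H) (μ : Fin k → ℝ),
      (∀ i, E (v i) = v i) ∧ (∀ i, ‖v i‖ = 1) ∧
      (∀ i, P (v i) = ((μ i : ℝ) : ℂ) • v i) ∧
      ∀ x : H, P x = ∑ i, (((μ i : ℝ) : ℂ) * ⟪v i, x⟫_ℂ) • v i := by
  have hEP : ∀ x : H, E (P x) = P x := fun x => by
    conv_rhs => rw [← hrange]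
    rfl
  have hfix : ∀ y : H, y ∈ LinearMap.range (E : H →ₗ[ℂ] H) → E y = y := by
    rintro y ⟨u, rfl⟩
    show E (E u) = E u
    rw [← ContinuousLinearMap.mul_apply, hidem]
  have hmem : ∀ x : H, P x ∈ LinearMap.range (E : H →ₗ[ℂ] H) := fun x => ⟨P x, hEP x⟩
  set V := LinearMap.range (E : H →ₗ[ℂ] H) with hVdef
  have hsymm0 := ContinuousLinearMap.isSelfAdjoint_iff_isSymmetric.mp hPsa
  have hsymm : ∀ a c : H, ⟪P a, c⟫_ℂ = ⟪a, P c⟫_ℂ := fun a c => hsymm0 a c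
  let T : V →ₗ[ℂ] V := LinearMap.codRestrict V ((P : H →ₗ[ℂ] H).comp V.subtype) fun c => hmem c
  have hTapp : ∀ u : V, (T u : H) = P u := fun u => rfl
  have hT : T.IsSymmetric := by
    intro u w
    rw [Submodule.coe_inner, Submodule.coe_inner, hTapp, hTapp]
    exact hsymm _ _
  haveI : FiniteDimensional ℂ V := hfin
  let b := hT.eigenvectorBasis rfl
  let μ := hT.eigenvalues rfl
  have heig : ∀ i, P ((b i : V) : H) = ((μ i : ℝ) : ℂ) • ((b i : V) : H) := by
    intro i
    have h := hT.apply_eigenvectorBasis rfl i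
    have h2 := congrArg (Subtype.val) h
    rw [hTapp] at h2
    simpa using h2
  refine ⟨Module.finrank ℂ V, fun i => ((b i : V) : H), μ, fun i => hfix _ (b i).2, ?_, heig, ?_⟩
  · intro i
    exact b.orthonormal.1 i
  · intro x
    have h1 : ∑ i, ⟪b i, (⟨P x, hmem x⟩ : V)⟫_ℂ • b i = (⟨P x, hmem x⟩ : V) := b.sum_repr' _
    have h2 : P x = ∑ i, ⟪b i, (⟨P x, hmem x⟩ : V)⟫_ℂ • ((b i : V) : H) := by
      conv_lhs => rw [show P x = ((⟨P x, hmem x⟩ : V) : H) from rfl, ← h1]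
      simp
    rw [h2]
    refine Finset.sum_congr rfl fun i _ => ?_
    congr 1
    rw [Submodule.coe_inner]
    rw [show ((⟨P x, hmem x⟩ : V) : H) = P x from rfl]
    rw [← hsymm ((b i : V) : H) x]
    rw [heig i, inner_smul_left, Complex.conj_ofReal]

lemma diag_inner_apply (e : HilbertBasis ℕ ℂ H) (D : H →L[ℂ] H) (d : ℕ → ℝ)
    (hd : ∀ n, D (e n) = ((d n : ℝ) : ℂ) • e n) (m : ℕ) (x : H) :
    ⟪e m, D x⟫_ℂ = ((d m : ℝ) : ℂ) * ⟪e m, x⟫_ℂ := by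
  have h1 := (e.hasSum_repr x).mapL D
  have h2 := h1.mapL (innerSL ℂ (e m))
  have h3 : (fun n => (innerSL ℂ (e m)) (D (e.repr x n • e n)))
      = fun n => if n = m then ((d m : ℝ) : ℂ) * ⟪e m, x⟫_ℂ else 0 := by
    funext n
    rw [innerSL_apply_apply, map_smul, inner_smul_right, hd n, inner_smul_right]
    rcases eq_or_ne n m with rfl | hnm
    · rw [e.repr_apply_apply, inner_self_one (e.orthonormal.1 n)]
      simp
      ring
    · have hzero : ⟪e m, e n⟫_ℂ = 0 := e.orthonormal.2 (Ne.symm hnm)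
      simp [hzero, hnm]
  rw [h3] at h2
  exact h2.unique (hasSum_ite_eq m (((d m : ℝ) : ℂ) * ⟪e m, x⟫_ℂ))

lemma hasSum_diag (e : HilbertBasis ℕ ℂ H) (D : H →L[ℂ] H) (d : ℕ → ℝ)
    (hd : ∀ n, D (e n) = ((d n : ℝ) : ℂ) • e n)
    {k : ℕ} (v : Fin k → H) (μ : Fin k → ℝ) (hvnorm : ∀ i, ‖v i‖ = 1)
    (P : H →L[ℂ] H) (hPexp : ∀ x : H, P x = ∑ i, (((μ i : ℝ) : ℂ) * ⟪v i, x⟫_ℂ) • v i) :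
    HasSum (fun n => ⟪e n, P (e n)⟫_ℂ) (∑ i, ((μ i : ℝ) : ℂ)) ∧
    HasSum (fun n => ((d n : ℝ) : ℂ) * ⟪e n, P (e n)⟫_ℂ)
      (∑ i, ((μ i : ℝ) : ℂ) * ⟪v i, D (v i)⟫_ℂ) := by
  have hterm : ∀ n, ⟪e n, P (e n)⟫_ℂ
      = ∑ i, ((μ i : ℝ) : ℂ) * (⟪v i, e n⟫_ℂ * ⟪e n, v i⟫_ℂ) := by
    intro n
    rw [hPexp (e n), inner_sum]
    refine Finset.sum_congr rfl fun i _ => ?_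
    rw [inner_smul_right]
    ring
  constructor
  · have h1 : ∀ i ∈ Finset.univ, HasSum
        (fun n => ((μ i : ℝ) : ℂ) * (⟪v i, e n⟫_ℂ * ⟪e n, v i⟫_ℂ)) ((μ i : ℝ) : ℂ) := by
      intro i _
      have h := (e.hasSum_inner_mul_inner (v i) (v i)).mul_left ((μ i : ℝ) : ℂ)
      rwa [inner_self_one (hvnorm i), mul_one] at h
    have h2 := hasSum_sum h1
    have h3 : (fun n => ⟪e n, P (e n)⟫_ℂ)
        = fun n => ∑ i, ((μ i : ℝ) : ℂ) * (⟪v i, e n⟫_ℂ * ⟪e n, v i⟫_ℂ) := funext hterm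
    rw [h3]
    exact h2
  · have h1 : ∀ i ∈ Finset.univ, HasSum
        (fun n => ((d n : ℝ) : ℂ) * (((μ i : ℝ) : ℂ) * (⟪v i, e n⟫_ℂ * ⟪e n, v i⟫_ℂ)))
        (((μ i : ℝ) : ℂ) * ⟪v i, D (v i)⟫_ℂ) := by
      intro i _
      have h := (e.hasSum_inner_mul_inner (v i) (D (v i))).mul_left ((μ i : ℝ) : ℂ)
      have heq : (fun n => ((μ i : ℝ) : ℂ) * (⟪v i, e n⟫_ℂ * ⟪e n, D (v i)⟫_ℂ))
          = fun n => ((d n : ℝ) : ℂ) * (((μ i : ℝ) : ℂ) * (⟪v i, e n⟫_ℂ * ⟪e n, v i⟫_ℂ)) := by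
        funext n
        rw [diag_inner_apply e D d hd n (v i)]
        ring
      rwa [heq] at h
    have h2 := hasSum_sum h1
    have h3 : (fun n => ((d n : ℝ) : ℂ) * ⟪e n, P (e n)⟫_ℂ)
        = fun n => ∑ i, ((d n : ℝ) : ℂ) * (((μ i : ℝ) : ℂ) * (⟪v i, e n⟫_ℂ * ⟪e n, v i⟫_ℂ)) := by
      funext n
      rw [hterm n, Finset.mul_sum]
    rw [h3]
    exact h2

theorem stmt_14 (e : HilbertBasis ℕ ℂ H) (A : H →L[ℂ] H)
    (hcomp : IsCompactOperator ⇑A) (hsa : IsSelfAdjoint A) (hA : 0 < ‖A‖)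
    (hmax : sSup (spectrum ℝ A) = ‖A‖) (hmin : sInf (spectrum ℝ A) = -‖A‖)
    (Ep Em : H →L[ℂ] H)
    (hEpsa : IsSelfAdjoint Ep) (hEpidem : Ep * Ep = Ep)
    (hEp : ∀ x : H, Ep x = x ↔ A x = ((‖A‖ : ℝ) : ℂ) • x)
    (hEpfin : FiniteDimensional ℂ (LinearMap.range (Ep : H →ₗ[ℂ] H)))
    (hEmsa : IsSelfAdjoint Em) (hEmidem : Em * Em = Em)
    (hEm : ∀ x : H, Em x = x ↔ A x = ((-‖A‖ : ℝ) : ℂ) • x)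
    (hEmfin : FiniteDimensional ℂ (LinearMap.range (Em : H →ₗ[ℂ] H)))
    (X : H →L[ℂ] H) (hX : X ≠ 0) (hXsa : IsSelfAdjoint X) (hXtc : IsTraceClass e X)
    (hXdiag : ∀ n, ⟪e n, X (e n)⟫_ℂ = 0)
    (hXp : Ep * opPosPart X = opPosPart X) (hXm : Em * opNegPart X = opNegPart X)
    (htr : opTrace e (X * A) = ((‖A‖ * traceNorm e X : ℝ) : ℂ)) :
    ∀ D : H →L[ℂ] H, IsCompactOperator ⇑D → RealDiag e D →
      ∃ y z : H, Ep y = y ∧ Em z = z ∧ ‖y‖ = 1 ∧ ‖z‖ = 1 ∧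
        (⟪y, D y⟫_ℂ).re ≤ (⟪z, D z⟫_ℂ).re := by
  intro D hDc hDdiag
  choose d hd using hDdiag
  have hPp : opPosPart X = X⁺ := opPosPart_eq X hXsa
  have hNp : opNegPart X = X⁻ := opNegPart_eq X hXsa
  have hPnn : (0 : H →L[ℂ] H) ≤ opPosPart X := hPp ▸ CFC.posPart_nonneg X
  have hNnn : (0 : H →L[ℂ] H) ≤ opNegPart X := hNp ▸ CFC.negPart_nonneg X
  have hPsa : IsSelfAdjoint (opPosPart X) := hPnn.isSelfAdjoint
  have hNsa : IsSelfAdjoint (opNegPart X) := hNnn.isSelfAdjoint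
  have hPNX : ∀ x : H, opPosPart X x - opNegPart X x = X x := by
    intro x
    have h : opPosPart X - opNegPart X = X := by
      rw [hPp, hNp]; exact CFC.posPart_sub_negPart X hXsa
    calc opPosPart X x - opNegPart X x = (opPosPart X - opNegPart X) x := by
          rw [ContinuousLinearMap.sub_apply]
      _ = X x := by rw [h]
  obtain ⟨k, v, μ, hEv, hvnorm, hPv, hPexp⟩ := keyDecomp Ep (opPosPart X) hEpidem hEpfin hPsa hXp
  obtain ⟨l, w, ν, hEw, hwnorm, hNw, hNexp⟩ := keyDecomp Em (opNegPart X) hEmidem hEmfin hNsa hXm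
  obtain ⟨hP0, hPD⟩ := hasSum_diag e D d hd v μ hvnorm (opPosPart X) hPexp
  obtain ⟨hN0, hND⟩ := hasSum_diag e D d hd w ν hwnorm (opNegPart X) hNexp
  -- termwise equality of the diagonals of P and N
  have hdiagPN : ∀ n, ⟪e n, opPosPart X (e n)⟫_ℂ = ⟪e n, opNegPart X (e n)⟫_ℂ := by
    intro n
    have h2 : ⟪e n, opPosPart X (e n) - opNegPart X (e n)⟫_ℂ = 0 := by
      rw [hPNX]; exact hXdiag n
    rw [inner_sub_right] at h2
    exact sub_eq_zero.mp h2
  have hfunPN : (fun n => ⟪e n, opNegPart X (e n)⟫_ℂ)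
      = fun n => ⟪e n, opPosPart X (e n)⟫_ℂ := funext fun n => (hdiagPN n).symm
  rw [hfunPN] at hN0
  have hfunPND : (fun n => ((d n : ℝ) : ℂ) * ⟪e n, opNegPart X (e n)⟫_ℂ)
      = fun n => ((d n : ℝ) : ℂ) * ⟪e n, opPosPart X (e n)⟫_ℂ := by
    funext n; rw [hdiagPN n]
  rw [hfunPND] at hND
  have hsum0 : ∑ i, ((μ i : ℝ) : ℂ) = ∑ j, ((ν j : ℝ) : ℂ) := hP0.unique hN0
  have hsumD : ∑ i, ((μ i : ℝ) : ℂ) * ⟪v i, D (v i)⟫_ℂ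
      = ∑ j, ((ν j : ℝ) : ℂ) * ⟪w j, D (w j)⟫_ℂ := hPD.unique hND
  -- eigenvalues are nonnegative
  have hμ : ∀ i, 0 ≤ μ i := by
    intro i
    have h1 : ⟪v i, opPosPart X (v i)⟫_ℂ = ((μ i : ℝ) : ℂ) := by
      rw [hPv i, inner_smul_right, inner_self_one (hvnorm i), mul_one]
    have h2 := inner_re_nonneg_of_nonneg hPnn (v i)
    rw [h1] at h2
    simpa using h2
  have hν : ∀ j, 0 ≤ ν j := by
    intro j
    have h1 : ⟪w j, opNegPart X (w j)⟫_ℂ = ((ν j : ℝ) : ℂ) := by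
      rw [hNw j, inner_smul_right, inner_self_one (hwnorm j), mul_one]
    have h2 := inner_re_nonneg_of_nonneg hNnn (w j)
    rw [h1] at h2
    simpa using h2
  -- total masses agree and are positive
  set S : ℝ := ∑ i, μ i with hSdef
  have hSν : ∑ j, ν j = S := by
    have : ((∑ j, ν j : ℝ) : ℂ) = ((S : ℝ) : ℂ) := by
      rw [hSdef]
      push_cast
      rw [← hsum0]
    exact_mod_cast this
  have hSnonneg : 0 ≤ S := Finset.sum_nonneg fun i _ => hμ i
  have hSpos : 0 < S := by
    rcases hSnonneg.lt_or_eq with h | h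
    · exact h
    · exfalso
      apply hX
      have hμ0 : ∀ i, μ i = 0 := by
        intro i
        have := (Finset.sum_eq_zero_iff_of_nonneg fun i _ => hμ i).mp h.symm
        exact this i (Finset.mem_univ i)
      have hν0 : ∀ j, ν j = 0 := by
        intro j
        have hz : ∑ j, ν j = 0 := by rw [hSν, ← h]
        have := (Finset.sum_eq_zero_iff_of_nonneg fun j _ => hν j).mp hz
        exact this j (Finset.mem_univ j)
      ext x
      have hPx : opPosPart X x = 0 := by
        rw [hPexp x]
        apply Finset.sum_eq_zero
        intro i _
        rw [hμ0 i]
        simp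
      have hNx : opNegPart X x = 0 := by
        rw [hNexp x]
        apply Finset.sum_eq_zero
        intro j _
        rw [hν0 j]
        simp
      have := hPNX x
      rw [hPx, hNx] at this
      simpa using this.symm
  -- pick the extremizers
  have hkne : (Finset.univ : Finset (Fin k)).Nonempty := by
    rcases (Finset.univ : Finset (Fin k)).eq_empty_or_nonempty with h | h
    · exfalso
      have : S = 0 := by rw [hSdef, h, Finset.sum_empty]
      exact absurd this (ne_of_gt hSpos)
    · exact h
  have hlne : (Finset.univ : Finset (Fin l)).Nonempty := by
    rcases (Finset.univ : Finset (Fin l)).eq_empty_or_nonempty with h | h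
    · exfalso
      have : S = 0 := by rw [← hSν, h, Finset.sum_empty]
      exact absurd this (ne_of_gt hSpos)
    · exact h
  obtain ⟨i₀, -, hi₀⟩ := Finset.exists_min_image Finset.univ
    (fun i => (⟪v i, D (v i)⟫_ℂ).re) hkne
  obtain ⟨j₀, -, hj₀⟩ := Finset.exists_max_image Finset.univ
    (fun j => (⟪w j, D (w j)⟫_ℂ).re) hlne
  -- real parts of the weighted sums
  have hre : ∑ i, μ i * (⟪v i, D (v i)⟫_ℂ).re = ∑ j, ν j * (⟪w j, D (w j)⟫_ℂ).re := by
    have := congrArg Complex.re hsumD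
    rw [Complex.re_sum, Complex.re_sum] at this
    simpa [Complex.mul_re] using this
  have hlow : S * (⟪v i₀, D (v i₀)⟫_ℂ).re ≤ ∑ i, μ i * (⟪v i, D (v i)⟫_ℂ).re := by
    rw [hSdef, Finset.sum_mul]
    exact Finset.sum_le_sum fun i _ =>
      mul_le_mul_of_nonneg_left (hi₀ i (Finset.mem_univ i)) (hμ i)
  have hhigh : ∑ j, ν j * (⟪w j, D (w j)⟫_ℂ).re ≤ S * (⟪w j₀, D (w j₀)⟫_ℂ).re := by
    rw [← hSν, Finset.sum_mul]
    exact Finset.sum_le_sum fun j _ =>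
      mul_le_mul_of_nonneg_left (hj₀ j (Finset.mem_univ j)) (hν j)
  have hfinal : (⟪v i₀, D (v i₀)⟫_ℂ).re ≤ (⟪w j₀, D (w j₀)⟫_ℂ).re :=
    le_of_mul_le_mul_left (hlow.trans (hre.le.trans hhigh)) hSpos
  exact ⟨v i₀, w j₀, hEv i₀, hEw j₀, hvnorm i₀, hwnorm j₀, hfinal⟩
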